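/- Define F : ℂ³ → ℂ by F(x,y,z) = (x² − z·y²)·conj(y) (the mixed function f·ḡ with f = x² − z·y² and g = y, Sabbah's example). Let z₀ ∈ ℂ with z₀ ≠ 0. Then for every sequence of points pₙ → (0, 0, z₀) and every sequence of unit vectors wₙ ∈ ℂ³ orthogonal (with respect to the real inner product) to ker(fderiv ℝ F pₙ) that converges to some w ∈ ℂ³, the third complex component of w is zero. Consequently every limit of tangent spaces to the fibres of F at points approaching (0,0,z₀) contains the real tangent space of the z-axis, i.e. the z-axis minus the origin is a single Thom (a_F)-regular stratum of F, even though the holomorphic map (f,g) = (x² − z·y², y) is not Thom regular along the z-axis. (Claim of Example 3.4: NT_{f·ḡ} = {0} while NT_{(f,g)} is the z-axis.) -/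

import Mathlib

open Complex Filter Function Metric

noncomputable section

/-- `ℂ³` with its Euclidean (Hermitian) norm. -/
abbrev C3 := EuclideanSpace ℂ (Fin 3)

/-- The point `(a, b, c) ∈ ℂ³`. -/
def mk3 (a b c : ℂ) : C3 := WithLp.toLp 2 ![a, b, c]

/-- Real inner product `⟨v,w⟩_ℝ = Re Σ_k v_k·conj(w_k)` on `ℂ³ ≅ ℝ⁶`. -/
def realInnerC (v w : C3) : ℝ := (∑ k : Fin 3, v k * (starRingEnd ℂ) (w k)).re

lemma mk3_app0 (a b c : ℂ) : (mk3 a b c) 0 = a := rfl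
lemma mk3_app1 (a b c : ℂ) : (mk3 a b c) 1 = b := rfl
lemma mk3_app2 (a b c : ℂ) : (mk3 a b c) 2 = c := rfl

lemma realInnerC_eq (v w : C3) :
    realInnerC v w = (v 0 * (starRingEnd ℂ) (w 0) + v 1 * (starRingEnd ℂ) (w 1)
      + v 2 * (starRingEnd ℂ) (w 2)).re := by
  simp [realInnerC, Fin.sum_univ_three]

lemma coord_abs_le (v : C3) (i : Fin 3) : ‖v i‖ ≤ ‖v‖ := by
  have h := EuclideanSpace.norm_eq v
  have h1 : ‖v i‖^2 ≤ ∑ k : Fin 3, ‖v k‖^2 :=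
    Finset.single_le_sum (fun k _ => sq_nonneg ‖v k‖) (Finset.mem_univ i)
  have h2 : Real.sqrt (‖v i‖^2) ≤ Real.sqrt (∑ k : Fin 3, ‖v k‖^2) := Real.sqrt_le_sqrt h1
  rw [Real.sqrt_sq (norm_nonneg _)] at h2
  rw [h]; exact h2

def pj (i : Fin 3) : C3 →L[ℝ] ℂ := (EuclideanSpace.proj i (𝕜 := ℂ)).restrictScalars ℝ
def cjm : ℂ →L[ℝ] ℂ := Complex.conjCLE.toContinuousLinearMap

lemma fderiv_F_apply (F : C3 → ℂ)
    (hF : ∀ q : C3, F q = ((q 0) ^ 2 - q 2 * (q 1) ^ 2) * starRingEnd ℂ (q 1))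
    (p u : C3) :
    fderiv ℝ F p u = ((p 0)^2 - p 2 * (p 1)^2) * (starRingEnd ℂ) (u 1)
      + (starRingEnd ℂ) (p 1) * (2 * p 0 * u 0 - 2 * p 2 * p 1 * u 1 - (p 1)^2 * u 2) := by
  have hFeq : F = fun q : C3 => ((q 0) * (q 0) - q 2 * ((q 1) * (q 1))) * starRingEnd ℂ (q 1) := by
    funext q; rw [hF q]; ring
  have h0 : HasFDerivAt (fun q : C3 => q 0) (pj 0) p := (pj 0).hasFDerivAt
  have h1 : HasFDerivAt (fun q : C3 => q 1) (pj 1) p := (pj 1).hasFDerivAt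
  have h2 : HasFDerivAt (fun q : C3 => q 2) (pj 2) p := (pj 2).hasFDerivAt
  have hg : HasFDerivAt (fun q : C3 => (starRingEnd ℂ) (q 1)) (cjm.comp (pj 1)) p :=
    (cjm.hasFDerivAt).comp p h1
  have hf : HasFDerivAt (fun q : C3 => (q 0) * (q 0) - q 2 * ((q 1) * (q 1)))
      ((p 0 • pj 0 + p 0 • pj 0) - (p 2 • (p 1 • pj 1 + p 1 • pj 1) + (p 1 * p 1) • pj 2)) p :=
    (h0.mul h0).sub (h2.mul (h1.mul h1))
  have hFD := (hf.mul hg)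
  rw [hFeq]; erw [hFD.fderiv]
  simp [pj, cjm, ContinuousLinearMap.smul_apply, ContinuousLinearMap.comp_apply, smul_eq_mul,
    Complex.conjCLE_apply]
  ring

lemma key_ineq (F : C3 → ℂ)
    (hF : ∀ q : C3, F q = ((q 0) ^ 2 - q 2 * (q 1) ^ 2) * starRingEnd ℂ (q 1))
    (p wv : C3) (hnorm : ‖wv‖ = 1)
    (horth : ∀ u : C3, fderiv ℝ F p u = 0 → realInnerC wv u = 0) :
    ‖wv 2‖ * ‖p 2‖ ≤ ‖p 1‖ + ‖p 0‖ / 2 := by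
  set K := starRingEnd ℂ with hK
  set x := p 0; set y := p 1; set z := p 2
  set w0 := wv 0; set w1 := wv 1; set w2 := wv 2
  have hd := fderiv_F_apply F hF p
  by_cases hy : y = 0
  · -- kernel vector (0,0,w2) shows w2 = 0
    have hker : fderiv ℝ F p (mk3 0 0 w2) = 0 := by
      rw [hd]; simp [mk3_app1, mk3_app2, show p 1 = 0 from hy]
    have := horth _ hker
    rw [realInnerC_eq] at this
    simp only [mk3_app0, mk3_app1, mk3_app2, map_zero, mul_zero, zero_add,
      Complex.mul_conj] at this
    have hw2 : w2 = 0 := by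
      have : Complex.normSq w2 = 0 := by rw [Complex.normSq_apply]; simpa using this
      exact Complex.normSq_eq_zero.mp this
    rw [hw2]
    simp [map_zero]
    positivity
  · -- relations from two kernel vectors
    set c1 := w0 * (K y)^2 + 2 * K x * w2 with hc1def
    have hker1 : fderiv ℝ F p (mk3 (y^2 * c1) 0 (2*x*c1)) = 0 := by
      rw [hd]; simp only [mk3_app0, mk3_app1, mk3_app2, map_zero]; ring
    have h1 := horth _ hker1
    rw [realInnerC_eq] at h1
    simp only [mk3_app0, mk3_app1, mk3_app2, map_zero, mul_zero] at h1
    have e1 : w0 * K (y^2 * c1) + 0 + w2 * K (2*x*c1) = c1 * K c1 := by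
      simp only [hc1def, map_add, map_mul, map_pow, map_ofNat, Complex.conj_conj, hK]
      ring
    rw [e1, Complex.mul_conj] at h1
    have hc1 : c1 = 0 := Complex.normSq_eq_zero.mp (by simpa using h1)
    set c2 := w1 * K y * y^2 - 2 * K z * y^2 * w2 + K w2 * (x^2 - z*y^2) with hc2def
    have hker2 : fderiv ℝ F p
        (mk3 0 (y * (K y)^2 * c2) ((x^2 - z*y^2) * K c2 - 2*z*(K y)^2*c2)) = 0 := by
      rw [hd]; simp only [mk3_app0, mk3_app1, mk3_app2]
      simp only [hc2def, map_add, map_sub, map_mul, map_pow, map_ofNat, Complex.conj_conj, hK]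
      ring
    have h2 := horth _ hker2
    rw [realInnerC_eq] at h2
    simp only [mk3_app0, mk3_app1, mk3_app2, map_zero, mul_zero, zero_add] at h2
    set e := w2 * K (x^2 - z*y^2) * c2 with hedef
    have e2 : w1 * K (y * (K y)^2 * c2) + w2 * K ((x^2 - z*y^2) * K c2 - 2*z*(K y)^2*c2)
        = c2 * K c2 + (e - K e) := by
      simp only [hc2def, hedef, map_add, map_sub, map_mul, map_pow, map_ofNat,
        Complex.conj_conj, hK]
      ring
    rw [e2] at h2
    have h2' : (c2 * K c2).re = 0 := by
      have : (c2 * K c2).re + ((e).re - (K e).re) = 0 := by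
        simpa [Complex.add_re, Complex.sub_re] using h2
      simpa [hK, Complex.conj_re] using this
    rw [Complex.mul_conj] at h2'
    have hc2 : c2 = 0 := Complex.normSq_eq_zero.mp (by simpa using h2')
    -- pass to absolute values
    have haK : ∀ t : ℂ, ‖K t‖ = ‖t‖ := fun t => Complex.norm_conj t
    have hY : 0 < ‖y‖ := by simpa [map_eq_zero] using hy
    have hW0 : ‖w0‖ ≤ 1 := by rw [← hnorm]; exact coord_abs_le wv 0
    have hW1 : ‖w1‖ ≤ 1 := by rw [← hnorm]; exact coord_abs_le wv 1
    have r1 : ‖w0‖ * (‖y‖)^2 = 2 * ‖x‖ * ‖w2‖ := by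
      have hh : w0 * (K y)^2 = -(2 * K x * w2) := by
        rw [hc1def] at hc1; linear_combination hc1
      have habs := congrArg (‖·‖) hh
      simpa [norm_mul, norm_pow, norm_neg, haK, Complex.norm_two] using habs
    have r2 : 2 * ‖z‖ * (‖y‖)^2 * ‖w2‖
        ≤ ‖w1‖ * (‖y‖)^3
          + ‖w2‖ * ((‖x‖)^2 + ‖z‖ * (‖y‖)^2) := by
      have heq : (2:ℂ) * K z * y^2 * w2 = w1 * K y * y^2 + K w2 * (x^2 - z*y^2) := by
        rw [hc2def] at hc2; linear_combination -hc2
      have habs := congrArg (‖·‖) heq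
      have h1' : ‖(2:ℂ) * K z * y^2 * w2‖
          = 2 * ‖z‖ * (‖y‖)^2 * ‖w2‖ := by
        rw [norm_mul, norm_mul, norm_mul, norm_pow, haK, Complex.norm_two]
      have hD : ‖x^2 - z*y^2‖ ≤ (‖x‖)^2 + ‖z‖ * (‖y‖)^2 := by
        have := norm_add_le (x^2) (-(z*y^2))
        simpa [sub_eq_add_neg, norm_mul, norm_pow] using this
      have h2'' : ‖w1 * K y * y^2 + K w2 * (x^2 - z*y^2)‖
          ≤ ‖w1‖ * (‖y‖)^3
            + ‖w2‖ * ((‖x‖)^2 + ‖z‖ * (‖y‖)^2) := by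
        calc ‖w1 * K y * y^2 + K w2 * (x^2 - z*y^2)‖
            ≤ ‖w1 * K y * y^2‖ + ‖K w2 * (x^2 - z*y^2)‖ :=
              norm_add_le _ _
          _ ≤ _ := by
              rw [norm_mul, norm_mul, norm_mul, norm_pow, haK, haK]
              have := mul_le_mul_of_nonneg_left hD (norm_nonneg w2)
              nlinarith [norm_nonneg w1, norm_nonneg y]
      rw [h1'] at habs; rw [habs]; exact h2''
    have hXa : 2 * ‖x‖ * ‖w2‖ ≤ (‖y‖)^2 := by
      nlinarith [norm_nonneg x, norm_nonneg w2, norm_nonneg w0,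
        sq_nonneg (‖y‖)]
    have hax : 0 ≤ ‖x‖ := norm_nonneg x
    have haz : 0 ≤ ‖z‖ := norm_nonneg z
    have haw2 : 0 ≤ ‖w2‖ := norm_nonneg w2
    have haw1 : 0 ≤ ‖w1‖ := norm_nonneg w1
    nlinarith [mul_le_mul_of_nonneg_left hXa hax, sq_nonneg (‖y‖), mul_pos hY hY,
      mul_le_mul_of_nonneg_right hW1 (pow_nonneg hY.le 3)]

/-- **Claim of Example 3.4 (Sabbah's example).**  For
`F(x,y,z) = (x² − z·y²)·conj(y)`, at every point `(0, 0, z₀)` with `z₀ ≠ 0` of the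
`z`-axis, all limits of unit normal vectors to the fibres of `F` (unit vectors orthogonal,
for the real inner product, to `ker (fderiv ℝ F pₘ)` along sequences `pₘ → (0,0,z₀)`) have
vanishing third complex component.  Hence every limit of tangent spaces to fibres of `F`
contains the real tangent space of the `z`-axis: the `z`-axis minus the origin is a single
Thom `(a_F)`-regular stratum, although the holomorphic map `(x² − z·y², y)` is not Thom
regular along the `z`-axis. -/
theorem sabbah_example_fgbar_thom_regular_along_z_axis
    (F : C3 → ℂ) (hF : ∀ q : C3, F q = ((q 0) ^ 2 - q 2 * (q 1) ^ 2) * starRingEnd ℂ (q 1))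
    (z₀ : ℂ) (hz₀ : z₀ ≠ 0)
    (ps ws : ℕ → C3) (w : C3)
    (hps : Tendsto ps atTop (nhds (mk3 0 0 z₀)))
    (hws : ∀ m : ℕ, ‖ws m‖ = 1 ∧
      ∀ u : C3, fderiv ℝ F (ps m) u = 0 → realInnerC (ws m) u = 0)
    (hlim : Tendsto ws atTop (nhds w)) :
    w 2 = 0 := by
  have hkey : ∀ m, ‖ws m 2‖ * ‖ps m 2‖
      ≤ ‖ps m 1‖ + ‖ps m 0‖ / 2 :=
    fun m => key_ineq F hF (ps m) (ws m) (hws m).1 (hws m).2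
  have hcont : ∀ i : Fin 3, Continuous fun v : C3 => ‖v i‖ := fun i =>
    continuous_norm.comp (EuclideanSpace.proj i (𝕜 := ℂ)).continuous
  have hL : Tendsto (fun m => ‖ws m 2‖ * ‖ps m 2‖) atTop
      (nhds (‖w 2‖ * ‖z₀‖)) := by
    have t1 : Tendsto (fun m => ‖ws m 2‖) atTop (nhds (‖w 2‖)) :=
      ((hcont 2).tendsto w).comp hlim
    have t2 : Tendsto (fun m => ‖ps m 2‖) atTop (nhds (‖z₀‖)) := by
      have := ((hcont 2).tendsto (mk3 0 0 z₀)).comp hps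
      simpa [mk3_app2, Function.comp_def] using this
    exact t1.mul t2
  have hR : Tendsto (fun m => ‖ps m 1‖ + ‖ps m 0‖ / 2) atTop
      (nhds 0) := by
    have t1 : Tendsto (fun m => ‖ps m 1‖) atTop (nhds 0) := by
      have := ((hcont 1).tendsto (mk3 0 0 z₀)).comp hps
      simpa [mk3_app1, Function.comp_def] using this
    have t0 : Tendsto (fun m => ‖ps m 0‖) atTop (nhds 0) := by
      have := ((hcont 0).tendsto (mk3 0 0 z₀)).comp hps
      simpa [mk3_app0, Function.comp_def] using this
    have := t1.add (t0.div_const 2)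
    simpa using this
  have hle : ‖w 2‖ * ‖z₀‖ ≤ 0 :=
    le_of_tendsto_of_tendsto' hL hR hkey
  have hz : 0 < ‖z₀‖ := by simpa [norm_pos_iff] using hz₀
  have : ‖w 2‖ = 0 := by nlinarith [norm_nonneg (w 2)]
  simpa [map_eq_zero] using this
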